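/- arXiv:1702.07911 — 2 statements merged into one kernel-verified Lean document; each statement's English description precedes it below -/
import Mathlib

section
/- For every integer s ≥ 0 and every real x with 0 ≤ x ≤ √((4s+6)(4s+7)), the Taylor polynomial T_{4s+3}(x) = ∑_{i=0}^{2s+1} (−1)^i x^{2i+1}/(2i+1)! satisfies T_{4s+3}(x) ≤ T_{4s+7}(x) ≤ sin x. -/
open Finset Real

noncomputable def Ssum (n : ℕ) (x : ℝ) : ℝ :=
  ∑ i ∈ Finset.range n, (-1 : ℝ) ^ i * x ^ (2 * i + 1) / (Nat.factorial (2 * i + 1))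

noncomputable def Csum (n : ℕ) (x : ℝ) : ℝ :=
  ∑ i ∈ Finset.range n, (-1 : ℝ) ^ i * x ^ (2 * i) / (Nat.factorial (2 * i))

lemma key (f f' : ℝ → ℝ) (hf : ∀ y, HasDerivAt f (f' y) y)
    (hd : ∀ y, 0 ≤ y → f' y ≤ 0) (h0 : f 0 ≤ 0) {x : ℝ} (hx : 0 ≤ x) : f x ≤ 0 := by
  have hA : AntitoneOn f (Set.Ici 0) := by
    apply antitoneOn_of_deriv_nonpos (convex_Ici 0)
    · exact fun y _ => (hf y).continuousAt.continuousWithinAt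
    · exact fun y _ => (hf y).differentiableAt.differentiableWithinAt
    · intro y hy
      rw [(hf y).deriv]
      exact hd y (le_of_lt (by simpa [interior_Ici] using hy))
  exact le_trans (hA Set.self_mem_Ici (Set.mem_Ici.2 hx) hx) h0

lemma hasDerivAt_Ssum (n : ℕ) (x : ℝ) : HasDerivAt (Ssum n) (Csum n x) x := by
  unfold Ssum Csum
  apply HasDerivAt.fun_sum
  intro i _
  have h1 : HasDerivAt (fun y : ℝ => y ^ (2 * i + 1)) ((2 * i + 1) * x ^ (2 * i)) x := by
    simpa using hasDerivAt_pow (2 * i + 1) x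
  have h2 := (h1.const_mul ((-1 : ℝ) ^ i)).div_const ((2 * i + 1).factorial : ℝ)
  refine h2.congr_deriv ?_
  have hfac : ((2 * i + 1).factorial : ℝ) = (2 * i + 1) * (2 * i).factorial := by
    rw [Nat.factorial_succ]; push_cast; ring
  have h3 : ((2 * i).factorial : ℝ) ≠ 0 := Nat.cast_ne_zero.2 (Nat.factorial_ne_zero _)
  have h4 : (2 * (i:ℝ) + 1) ≠ 0 := by positivity
  rw [hfac]
  field_simp

lemma hasDerivAt_Csum (n : ℕ) (x : ℝ) : HasDerivAt (Csum (n + 1)) (-(Ssum n x)) x := by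
  have heq : Csum (n + 1) = fun y =>
      (∑ i ∈ Finset.range n, (-1 : ℝ) ^ (i + 1) * y ^ (2 * (i + 1)) / (Nat.factorial (2 * (i + 1)))) + 1 := by
    funext y
    unfold Csum
    rw [Finset.sum_range_succ']
    simp
  rw [heq]
  have h : HasDerivAt (fun y : ℝ =>
      ∑ i ∈ Finset.range n, (-1 : ℝ) ^ (i + 1) * y ^ (2 * (i + 1)) / (Nat.factorial (2 * (i + 1))))
      (∑ i ∈ Finset.range n, -((-1 : ℝ) ^ i * x ^ (2 * i + 1) / (Nat.factorial (2 * i + 1)))) x := by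
    apply HasDerivAt.fun_sum
    intro i _
    have h1 : HasDerivAt (fun y : ℝ => y ^ (2 * (i + 1))) ((2 * (i + 1)) * x ^ (2 * i + 1)) x := by
      have := hasDerivAt_pow (2 * (i + 1)) x
      refine this.congr_deriv ?_; rw [show 2 * (i + 1) - 1 = 2 * i + 1 by omega]; push_cast; ring
    have h2 := (h1.const_mul ((-1 : ℝ) ^ (i + 1))).div_const ((2 * (i + 1)).factorial : ℝ)
    refine h2.congr_deriv ?_
    have hfac : ((2 * (i + 1)).factorial : ℝ) = (2 * i + 2) * (2 * i + 1).factorial := by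
      have : 2 * (i + 1) = (2 * i + 1) + 1 := by ring
      rw [this, Nat.factorial_succ]; push_cast; ring
    have h3 : ((2 * i + 1).factorial : ℝ) ≠ 0 := Nat.cast_ne_zero.2 (Nat.factorial_ne_zero _)
    have h4 : (2 * (i:ℝ) + 2) ≠ 0 := by positivity
    rw [hfac, pow_succ]
    field_simp
  simpa [Ssum, Finset.sum_neg_distrib] using h.add_const 1

lemma Ssum_zero (n : ℕ) : Ssum n 0 = 0 := by
  unfold Ssum; simp

lemma Csum_zero (n : ℕ) : Csum (n + 1) 0 = 1 := by
  unfold Csum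
  rw [Finset.sum_range_succ']
  simp

lemma main_ind (n : ℕ) : ∀ x : ℝ, 0 ≤ x →
    0 ≤ (-1 : ℝ) ^ (n + 1) * (Real.sin x - Ssum (n + 1) x) := by
  induction n with
  | zero =>
    intro x hx
    have h1 : Ssum 1 x = x := by unfold Ssum; simp
    have := Real.sin_le hx
    rw [h1, pow_one]
    nlinarith
  | succ n ih =>
    intro x hx
    -- cos step: 0 ≤ (-1)^(n+1) * (Csum (n+2) x - cos x)
    have hcos : ∀ y : ℝ, 0 ≤ y → 0 ≤ (-1 : ℝ) ^ (n + 1) * (Csum (n + 2) y - Real.cos y) := by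
      intro y hy
      have hkey := key (fun z => (-1 : ℝ) ^ (n + 1) * (Real.cos z - Csum (n + 2) z))
        (fun z => (-1 : ℝ) ^ (n + 1) * (-Real.sin z + Ssum (n + 1) z))
        (fun z => by
          have h1 := (Real.hasDerivAt_cos z).sub (hasDerivAt_Csum (n + 1) z)
          have h2 := h1.const_mul ((-1 : ℝ) ^ (n + 1))
          refine h2.congr_deriv ?_; ring)
        (fun z hz => by
          show (-1 : ℝ) ^ (n + 1) * (-Real.sin z + Ssum (n + 1) z) ≤ 0
          nlinarith [ih z hz])
        (by simp [Csum_zero])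
        hy
      have hkey' : (-1 : ℝ) ^ (n + 1) * (Real.cos y - Csum (n + 2) y) ≤ 0 := hkey
      nlinarith [hkey']
    have hkey := key (fun z => (-1 : ℝ) ^ (n + 2) * (Ssum (n + 2) z - Real.sin z))
      (fun z => (-1 : ℝ) ^ (n + 2) * (Csum (n + 2) z - Real.cos z))
      (fun z => by
        have h1 := (hasDerivAt_Ssum (n + 2) z).sub (Real.hasDerivAt_sin z)
        exact h1.const_mul _)
      (fun z hz => by
        have := hcos z hz
        show (-1 : ℝ) ^ (n + 2) * (Csum (n + 2) z - Real.cos z) ≤ 0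
        have hp : (-1 : ℝ) ^ (n + 2) = -(-1 : ℝ) ^ (n + 1) := by rw [pow_succ]; ring
        rw [hp]
        nlinarith)
      (by simp [Ssum_zero])
      hx
    have hkey' : (-1 : ℝ) ^ (n + 2) * (Ssum (n + 2) x - Real.sin x) ≤ 0 := hkey
    show 0 ≤ (-1 : ℝ) ^ (n + 2) * (Real.sin x - Ssum (n + 2) x)
    nlinarith [hkey']

theorem sin_taylor_lower (s : ℕ) (x : ℝ) (hx : 0 ≤ x)
    (hx2 : x ≤ Real.sqrt ((4 * s + 6) * (4 * s + 7))) :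
    (∑ i ∈ Finset.range (2 * s + 2), (-1 : ℝ) ^ i * x ^ (2 * i + 1) / (Nat.factorial (2 * i + 1))) ≤
      (∑ i ∈ Finset.range (2 * s + 4), (-1 : ℝ) ^ i * x ^ (2 * i + 1) / (Nat.factorial (2 * i + 1))) ∧
    (∑ i ∈ Finset.range (2 * s + 4), (-1 : ℝ) ^ i * x ^ (2 * i + 1) / (Nat.factorial (2 * i + 1))) ≤
      Real.sin x := by
  constructor
  · -- first part
    have hM : (0:ℝ) ≤ (4 * s + 6) * (4 * s + 7) := by positivity
    have hx2' : x ^ 2 ≤ (4 * s + 6) * (4 * s + 7) := by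
      have := pow_le_pow_left₀ hx hx2 2
      rwa [Real.sq_sqrt hM] at this
    set f : ℕ → ℝ := fun i => (-1 : ℝ) ^ i * x ^ (2 * i + 1) / (Nat.factorial (2 * i + 1)) with hf
    have h1 := Finset.sum_range_succ f (2 * s + 3)
    have h2 := Finset.sum_range_succ f (2 * s + 2)
    rw [show 2 * s + 3 + 1 = 2 * s + 4 by omega] at h1
    rw [show 2 * s + 2 + 1 = 2 * s + 3 by omega] at h2
    rw [h1, h2]
    show _ ≤ _ + f (2 * s + 2) + f (2 * s + 3)
    have he : (-1 : ℝ) ^ (2 * s + 2) = 1 := Even.neg_one_pow ⟨s + 1, by ring⟩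
    have ho3 : (-1 : ℝ) ^ (2 * s + 3) = -1 := Odd.neg_one_pow ⟨s + 1, by ring⟩
    simp only [hf]
    rw [he, ho3]
    have hterm : x ^ (2 * (2 * s + 3) + 1) / ((2 * (2 * s + 3) + 1).factorial : ℝ) ≤
        x ^ (2 * (2 * s + 2) + 1) / ((2 * (2 * s + 2) + 1).factorial : ℝ) := by
      have hfac : ((2 * (2 * s + 3) + 1).factorial : ℝ) =
          ((2 * (2 * s + 2) + 1).factorial : ℝ) * ((4 * s + 6) * (4 * s + 7)) := by
        have h1 : 2 * (2 * s + 3) + 1 = (2 * (2 * s + 2) + 1) + 1 + 1 := by ring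
        rw [h1, Nat.factorial_succ, Nat.factorial_succ]
        push_cast
        ring
      have hpow : x ^ (2 * (2 * s + 3) + 1) = x ^ (2 * (2 * s + 2) + 1) * x ^ 2 := by
        rw [← pow_add]
        congr 1
      have hf0 : (0:ℝ) < ((2 * (2 * s + 2) + 1).factorial : ℝ) := by
        exact_mod_cast Nat.factorial_pos _
      rw [hfac, hpow]
      rcases eq_or_lt_of_le hM with hM0 | hM0
      · nlinarith [pow_nonneg hx (2 * (2 * s + 2) + 1)]
      · rw [div_le_div_iff₀ (by positivity) hf0]
        have hxp : (0:ℝ) ≤ x ^ (2 * (2 * s + 2) + 1) := pow_nonneg hx _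
        nlinarith [mul_nonneg (mul_nonneg hxp hf0.le) (sub_nonneg.2 hx2')]
    simp only [neg_one_mul, one_mul, neg_div]
    linarith [hterm]
  · have h := main_ind (2 * s + 3) x hx
    have he : (-1 : ℝ) ^ (2 * s + 3 + 1) = 1 := Even.neg_one_pow ⟨s + 2, by ring⟩
    rw [he, one_mul] at h
    have : Ssum (2 * s + 3 + 1) x =
        ∑ i ∈ Finset.range (2 * s + 4), (-1 : ℝ) ^ i * x ^ (2 * i + 1) / (Nat.factorial (2 * i + 1)) := by
      unfold Ssum; norm_num
    linarith [this ▸ h]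
end

section
/- Let k ≥ 0 be an integer, p ≥ 1 a positive integer, and let d_k ∈ (0, π/2) satisfy cos d_k = |T_{4k+2}(d_k)| with T_{4k+2}(d_k) < 0. Then (cos x)^{2p} > (T_{4k+2}(x))^{2p} for all x in (0, d_k), and (cos x)^{2p} < (T_{4k+2}(x))^{2p} for all x in (d_k, π/2). -/
open Finset Real Nat

-- partial sums of sin series with odd number of terms overestimate sin
lemma sin_le_partial (x : ℝ) (hx0 : 0 ≤ x) (hx2 : x ≤ 2) (m : ℕ) :
    Real.sin x ≤ ∑ j ∈ range (2 * m + 1), (-1 : ℝ) ^ j * (x ^ (2 * j + 1) / (2 * j + 1)!) := by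
  have hfl : Filter.Tendsto (fun n => ∑ j ∈ range n, (-1 : ℝ) ^ j * (x ^ (2 * j + 1) / (2 * j + 1)!))
      Filter.atTop (nhds (Real.sin x)) := by
    have := (Real.hasSum_sin x).tendsto_sum_nat
    simpa [mul_div_assoc] using this
  have hfa : Antitone (fun j : ℕ => x ^ (2 * j + 1) / ((2 * j + 1)! : ℝ)) := by
    apply antitone_nat_of_succ_le
    intro j
    have h1 : (0:ℝ) < (2 * j + 1)! := by positivity
    have h2 : (0:ℝ) < (2 * (j+1) + 1)! := by positivity
    rw [div_le_div_iff₀ h2 h1]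
    have hfact : ((2 * (j+1) + 1)! : ℝ) = (2*j+3) * ((2*j+2) * (2*j+1)!) := by
      have : 2 * (j+1) + 1 = (2*j+1) + 1 + 1 := by ring
      rw [this, Nat.factorial_succ, Nat.factorial_succ]
      push_cast; ring
    have hpow : x ^ (2 * (j+1) + 1) = x ^ (2*j+1) * x ^ 2 := by
      rw [← pow_add]; ring_nf
    have hx4 : x ^ 2 ≤ 4 := by nlinarith
    have hxp : (0:ℝ) ≤ x ^ (2*j+1) := by positivity
    rw [hfact, hpow]
    have : ((2:ℝ)*j+3) * ((2*j+2) * (2*j+1)!) ≥ 4 * (2*j+1)! := by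
      have hj : (0:ℝ) ≤ (j:ℝ) := by positivity
      have h6 : (4:ℝ) ≤ (2*j+3) * (2*j+2) := by nlinarith
      calc (4:ℝ) * (2*j+1)! ≤ ((2*j+3) * (2*j+2)) * (2*j+1)! :=
            mul_le_mul_of_nonneg_right h6 h1.le
        _ = (2*↑j+3) * ((2*j+2) * (2*j+1)!) := by ring
    nlinarith [h1, mul_le_mul_of_nonneg_left hx4 hxp]
  exact hfa.tendsto_le_alternating_series hfl m


lemma partial_lt_cos (x : ℝ) (hx0 : 0 < x) (hx2 : x ≤ 2) (k : ℕ) :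
    ∑ i ∈ range (2 * k + 2), (-1 : ℝ) ^ i * x ^ (2 * i) / (2 * i)! < Real.cos x := by
  set N : ℕ := 2 * k + 2 with hN
  set f : ℕ → ℝ := fun i => (-1 : ℝ) ^ i * x ^ (2 * i) / (2 * i)! with hf
  set S : ℝ := ∑ i ∈ range N, f i with hS
  have hsum : HasSum f (Real.cos x) := Real.hasSum_cos x
  have htail : HasSum (fun n => f (n + N)) (Real.cos x - S) :=
    (hasSum_nat_add_iff N).2 (by rwa [sub_add_cancel])
  set c : ℕ → ℝ := fun n => x ^ (2 * (n + N)) / ((2 * (n + N))! : ℝ) with hc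
  have hfc : (fun n => f (n + N)) = fun n => (-1 : ℝ) ^ n * c n := by
    funext n
    have hev : (-1 : ℝ) ^ (n + N) = (-1 : ℝ) ^ n := by
      rw [pow_add, hN]
      have : Even (2 * k + 2) := ⟨k + 1, by ring⟩
      rw [this.neg_one_pow, mul_one]
    simp only [hf, hc, hev, mul_div_assoc]
  rw [hfc] at htail
  have hca : Antitone c := by
    apply antitone_nat_of_succ_le
    intro j
    simp only [hc]
    have h1 : (0:ℝ) < ((2 * (j + N))! : ℝ) := by positivity
    have h2 : (0:ℝ) < ((2 * (j + 1 + N))! : ℝ) := by positivity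
    rw [div_le_div_iff₀ h2 h1]
    have hfact : ((2 * (j + 1 + N))! : ℝ) =
        (2*(j+N)+2) * ((2*(j+N)+1) * ((2 * (j + N))! : ℝ)) := by
      have h3 : 2 * (j + 1 + N) = (2 * (j + N) + 1) + 1 := by ring
      rw [h3, Nat.factorial_succ, Nat.factorial_succ]
      push_cast; ring
    have hpow : x ^ (2 * (j + 1 + N)) = x ^ (2 * (j + N)) * x ^ 2 := by
      rw [← pow_add]; ring_nf
    have hx4 : x ^ 2 ≤ 4 := by nlinarith
    have hxp : (0:ℝ) ≤ x ^ (2 * (j + N)) := by positivity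
    rw [hfact, hpow]
    have hj : (2:ℝ) ≤ (j:ℝ) + (N:ℝ) := by
      have : (2:ℕ) ≤ j + N := by omega
      exact_mod_cast this
    have h6 : x ^ 2 ≤ (2*((j:ℝ)+N)+2) * (2*((j:ℝ)+N)+1) := by nlinarith
    nlinarith [mul_le_mul_of_nonneg_left (mul_le_mul_of_nonneg_right h6 h1.le) hxp]
  have hlow := hca.alternating_series_le_tendsto htail.tendsto_sum_nat 1
  have hsum2 : ∑ i ∈ range (2 * 1), (-1 : ℝ) ^ i * c i = c 0 - c 1 := by
    simp [Finset.sum_range_succ]; ring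
  rw [hsum2] at hlow
  have hcpos : c 1 < c 0 := by
    simp only [hc]
    have h1 : (0:ℝ) < ((2 * (0 + N))! : ℝ) := by positivity
    have h2 : (0:ℝ) < ((2 * (1 + N))! : ℝ) := by positivity
    rw [div_lt_div_iff₀ h2 h1]
    have hfact : ((2 * (1 + N))! : ℝ) =
        (2*(N:ℕ)+2) * ((2*(N:ℕ)+1) * ((2 * (0 + N))! : ℝ)) := by
      have h3 : 2 * (1 + N) = (2 * (0 + N) + 1) + 1 := by ring
      rw [h3, Nat.factorial_succ, Nat.factorial_succ]
      push_cast; ring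
    have hpow : x ^ (2 * (1 + N)) = x ^ (2 * (0 + N)) * x ^ 2 := by
      rw [← pow_add]; ring_nf
    have hx4 : x ^ 2 ≤ 4 := by nlinarith
    have hxp : (0:ℝ) < x ^ (2 * (0 + N)) := by positivity
    rw [hfact, hpow]
    have hj : (2:ℝ) ≤ (N:ℝ) := by
      have : (2:ℕ) ≤ N := by omega
      exact_mod_cast this
    have h6 : x ^ 2 < (2*(N:ℝ)+2) * (2*(N:ℝ)+1) := by nlinarith
    nlinarith [mul_lt_mul_of_pos_left (mul_lt_mul_of_pos_right h6 h1) hxp]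
  linarith

lemma hasDerivAt_T (k : ℕ) (x : ℝ) :
    HasDerivAt (fun y : ℝ => ∑ i ∈ range (2 * k + 2), (-1 : ℝ) ^ i * y ^ (2 * i) / (2 * i)!)
      (-∑ j ∈ range (2 * k + 1), (-1 : ℝ) ^ j * (x ^ (2 * j + 1) / (2 * j + 1)!)) x := by
  have h : HasDerivAt (fun y : ℝ => ∑ i ∈ range (2 * k + 2), (-1 : ℝ) ^ i * y ^ (2 * i) / (2 * i)!)
      (∑ i ∈ range (2 * k + 2), (-1 : ℝ) ^ i * (((2 * i : ℕ) : ℝ) * x ^ (2 * i - 1)) / (2 * i)!) x := by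
    apply HasDerivAt.fun_sum
    intro i _
    exact ((hasDerivAt_pow (2 * i) x).const_mul ((-1 : ℝ) ^ i)).div_const _
  convert h using 1
  rw [eq_comm, show 2 * k + 2 = (2 * k + 1) + 1 by ring,
    Finset.sum_range_succ' (fun i => (-1 : ℝ) ^ i * (((2 * i : ℕ) : ℝ) * x ^ (2 * i - 1)) / (2 * i)!) (2 * k + 1)]
  have h0 : (-1 : ℝ) ^ 0 * (((2 * 0 : ℕ) : ℝ) * x ^ (2 * 0 - 1)) / ((2 * 0)! : ℝ) = 0 := by norm_num
  rw [h0, add_zero, ← Finset.sum_neg_distrib]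
  apply Finset.sum_congr rfl
  intro j _
  have hfact : ((2 * (j + 1))! : ℝ) = (2 * (j:ℝ) + 2) * (2 * j + 1)! := by
    rw [show 2 * (j + 1) = (2 * j + 1) + 1 by ring, Nat.factorial_succ]
    push_cast; ring
  have hsub : 2 * (j + 1) - 1 = 2 * j + 1 := by omega
  rw [hsub, hfact, pow_succ]
  have hfp : (0:ℝ) < (2 * j + 1)! := by positivity
  field_simp
  push_cast; ring

lemma F_strictAnti (k : ℕ) :
    StrictAntiOn (fun x => Real.cos x +
      ∑ i ∈ range (2 * k + 2), (-1 : ℝ) ^ i * x ^ (2 * i) / (2 * i)!)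
      (Set.Icc 0 (Real.pi / 2)) := by
  have hder : ∀ x : ℝ, HasDerivAt (fun x => Real.cos x +
      ∑ i ∈ range (2 * k + 2), (-1 : ℝ) ^ i * x ^ (2 * i) / (2 * i)!)
      (-Real.sin x + -∑ j ∈ range (2 * k + 1), (-1 : ℝ) ^ j * (x ^ (2 * j + 1) / (2 * j + 1)!)) x :=
    fun x => (Real.hasDerivAt_cos x).add (hasDerivAt_T k x)
  apply strictAntiOn_of_deriv_neg (convex_Icc _ _)
  · exact fun x _ => ((hder x).differentiableAt).continuousAt.continuousWithinAt
  · intro x hx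
    rw [interior_Icc] at hx
    rw [(hder x).deriv]
    have hxpi : x < Real.pi / 2 := hx.2
    have hx2 : x ≤ 2 := by
      have := Real.pi_le_four
      linarith
    have hsin := sin_le_partial x hx.1.le hx2 k
    have hsinpos : 0 < Real.sin x := Real.sin_pos_of_pos_of_lt_pi hx.1 (by linarith [Real.pi_pos])
    linarith

lemma abs_pow_eq (a : ℝ) (p : ℕ) : |a| ^ (2 * p) = a ^ (2 * p) := by
  rw [pow_mul, pow_mul, sq_abs]

theorem cos_pow_compare (k : ℕ) (p : ℕ) (hp : 1 ≤ p) (d : ℝ)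
    (hd : d ∈ Set.Ioo 0 (Real.pi / 2))
    (hcos : Real.cos d = |∑ i ∈ Finset.range (2 * k + 2), (-1 : ℝ) ^ i * d ^ (2 * i) / (Nat.factorial (2 * i))|)
    (hneg : (∑ i ∈ Finset.range (2 * k + 2), (-1 : ℝ) ^ i * d ^ (2 * i) / (Nat.factorial (2 * i))) < 0) :
    (∀ x ∈ Set.Ioo 0 d,
      Real.cos x ^ (2 * p) >
        (∑ i ∈ Finset.range (2 * k + 2), (-1 : ℝ) ^ i * x ^ (2 * i) / (Nat.factorial (2 * i))) ^ (2 * p)) ∧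
    (∀ x ∈ Set.Ioo d (Real.pi / 2),
      Real.cos x ^ (2 * p) <
        (∑ i ∈ Finset.range (2 * k + 2), (-1 : ℝ) ^ i * x ^ (2 * i) / (Nat.factorial (2 * i))) ^ (2 * p)) := by
  obtain ⟨hd0, hdpi⟩ := hd
  set T : ℝ → ℝ := fun x => ∑ i ∈ Finset.range (2 * k + 2),
    (-1 : ℝ) ^ i * x ^ (2 * i) / (Nat.factorial (2 * i)) with hT
  have hpi2 : Real.pi / 2 ≤ 2 := by linarith [Real.pi_le_four]
  have hFd : Real.cos d + T d = 0 := by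
    rw [hcos, abs_of_neg hneg]; ring
  have hF := F_strictAnti k
  have hnp : 2 * p ≠ 0 := by omega
  constructor
  · intro x hx
    have hx2 : x ≤ 2 := by linarith [hx.2]
    have hxmem : x ∈ Set.Icc 0 (Real.pi / 2) := ⟨hx.1.le, by linarith [hx.2]⟩
    have hdmem : d ∈ Set.Icc 0 (Real.pi / 2) := ⟨hd0.le, hdpi.le⟩
    have hFx : 0 < Real.cos x + T x := by
      have h := hF hxmem hdmem hx.2
      dsimp only at h
      linarith
    have hupper : T x < Real.cos x := partial_lt_cos x hx.1 hx2 k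
    have habs : |T x| < Real.cos x := abs_lt.2 ⟨by linarith, hupper⟩
    have hcosnn : 0 ≤ Real.cos x := by
      apply Real.cos_nonneg_of_mem_Icc
      constructor <;> [linarith [hx.1, Real.pi_pos]; linarith [hx.2]]
    calc T x ^ (2 * p) = |T x| ^ (2 * p) := (abs_pow_eq _ _).symm
      _ < Real.cos x ^ (2 * p) := by
          exact pow_lt_pow_left₀ habs (abs_nonneg _) hnp
  · intro x hx
    have hx2 : x ≤ 2 := by linarith [hx.2]
    have hxmem : x ∈ Set.Icc 0 (Real.pi / 2) := ⟨by linarith [hx.1], hx.2.le⟩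
    have hdmem : d ∈ Set.Icc 0 (Real.pi / 2) := ⟨hd0.le, hdpi.le⟩
    have hFx : Real.cos x + T x < 0 := by
      have h := hF hdmem hxmem hx.1
      dsimp only at h
      linarith
    have hcospos : 0 < Real.cos x := by
      apply Real.cos_pos_of_mem_Ioo
      constructor <;> [linarith [hx.1, Real.pi_pos]; exact hx.2]
    have habs : Real.cos x < |T x| := by
      have hTneg : T x < 0 := by linarith
      rw [abs_of_neg hTneg]; linarith
    calc Real.cos x ^ (2 * p) < |T x| ^ (2 * p) :=
          pow_lt_pow_left₀ habs hcospos.le hnp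
      _ = T x ^ (2 * p) := abs_pow_eq _ _
end
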